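/- Let m and n be integers such that m is not a perfect square and m < 2n. Then the Diophantine equation x² − (n² + 1)y² = m has no solution in integers, and likewise x² − (n² + 1)y² = −m has no solution in integers. -/
import Mathlib


/-- If `m` is a positive non-square integer with `m < 2n`, then the Diophantine equation
`x² - (n² + 1)y² = ±m` has no integer solutions. -/
theorem no_solution_pell_type_one (m n : ℤ) (hm : 0 < m) (hn : 0 < n)
    (hsq : ¬ IsSquare m) (hlt : m < 2 * n) :
    (¬ ∃ x y : ℤ, x ^ 2 - (n ^ 2 + 1) * y ^ 2 = m) ∧
    (¬ ∃ x y : ℤ, x ^ 2 - (n ^ 2 + 1) * y ^ 2 = -m) := by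
  suffices H : ∀ k : ℕ, ∀ x y : ℤ, y.natAbs = k →
      ¬ (x ^ 2 - (n ^ 2 + 1) * y ^ 2 = m ∨ x ^ 2 - (n ^ 2 + 1) * y ^ 2 = -m) by
    constructor <;> rintro ⟨x, y, h⟩
    · exact H y.natAbs x y rfl (Or.inl h)
    · exact H y.natAbs x y rfl (Or.inr h)
  intro k
  induction k using Nat.strong_induction_on with
  | _ k ih =>
    intro x y hk h
    set a := |x| with ha_def
    set b := |y| with hb_def
    have ha2 : a ^ 2 = x ^ 2 := sq_abs x
    have hb2 : b ^ 2 = y ^ 2 := sq_abs y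
    have ha0 : 0 ≤ a := abs_nonneg x
    have hbk : b.natAbs = k := by rw [hb_def, Int.natAbs_abs, hk]
    by_cases hb : b = 0
    · have hy : y = 0 := abs_eq_zero.mp hb
      subst hy
      rcases h with h | h
      · have hx2 : x ^ 2 = m := by linarith [h]
        exact hsq ⟨x, by rw [← hx2]; ring⟩
      · nlinarith [sq_nonneg x]
    · have hb1 : 1 ≤ b := by
        rcases lt_or_eq_of_le (abs_nonneg y) with h' | h'
        · omega
        · omega
      rcases h with h | h
      · -- a² - (n²+1)b² = m
        have key : a ^ 2 - (n ^ 2 + 1) * b ^ 2 = m := by rw [ha2, hb2]; exact h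
        have h1 : n * b < a := by nlinarith [mul_nonneg hn.le (le_trans zero_le_one hb1)]
        have hbsq : 1 ≤ b ^ 2 := by nlinarith
        have h2 : a < (n + 1) * b := by
          by_contra h2'
          push_neg at h2'
          have hnb : 0 ≤ (n + 1) * b := by positivity
          have := mul_le_mul h2' h2' hnb ha0
          nlinarith
        set y' := a - n * b with hy'
        set x' := (n ^ 2 + 1) * b - n * a with hx'
        have hnorm : x' ^ 2 - (n ^ 2 + 1) * y' ^ 2 = -m := by
          have : x' ^ 2 - (n ^ 2 + 1) * y' ^ 2 = -(a ^ 2 - (n ^ 2 + 1) * b ^ 2) := by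
            rw [hx', hy']; ring
          rw [this, key]
        have hlt1 : 0 < y' := by omega
        have hlt2 : y' < b := by nlinarith
        have hklt : y'.natAbs < k := by omega
        exact ih y'.natAbs hklt x' y' rfl (Or.inr hnorm)
      · -- a² - (n²+1)b² = -m
        have key : a ^ 2 - (n ^ 2 + 1) * b ^ 2 = -m := by rw [ha2, hb2]; exact h
        have hbsq : 1 ≤ b ^ 2 := by nlinarith
        have h1 : (n - 1) * b < a := by
          by_contra h1'
          push_neg at h1'
          have hnb : 0 ≤ (n - 1) * b := by
            apply mul_nonneg <;> linarith
          have := mul_le_mul h1' h1' ha0 hnb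
          nlinarith
        have h2 : a < (n + 1) * b := by
          by_contra h2'
          push_neg at h2'
          have hnb : 0 ≤ (n + 1) * b := by positivity
          have := mul_le_mul h2' h2' hnb ha0
          nlinarith
        set y' := a - n * b with hy'
        set x' := (n ^ 2 + 1) * b - n * a with hx'
        have hnorm : x' ^ 2 - (n ^ 2 + 1) * y' ^ 2 = m := by
          have : x' ^ 2 - (n ^ 2 + 1) * y' ^ 2 = -(a ^ 2 - (n ^ 2 + 1) * b ^ 2) := by
            rw [hx', hy']; ring
          rw [this, key]; ring
        have hlt1 : -b < y' := by
          have : (n - 1) * b = n * b - b := by ring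
          rw [hy']; linarith
        have hlt2 : y' < b := by
          have : (n + 1) * b = n * b + b := by ring
          rw [hy']; linarith
        have hklt : y'.natAbs < k := by omega
        exact ih y'.natAbs hklt x' y' rfl (Or.inl hnorm)
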